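/- arXiv:2102.10197 — 9 statements merged into one kernel-verified Lean document; each statement's English description precedes it below -/
import Mathlib

section
/- For all integers n ≥ 1 and 0 ≤ k ≤ n, the local Lagrangian surgery trace J : ℝ^{n+1} → ℂ^n × ℂ is injective, its Fréchet derivative DJ_x is injective at every point x ∈ ℝ^{n+1}, and its image distribution is isotropic for the standard symplectic form: for every x ∈ ℝ^{n+1} and all v, w ∈ ℝ^{n+1} one has ω(DJ_x v, DJ_x w) = 0, where ℂ^n × ℂ is identified with ℂ^{n+1} and ω is the standard symplectic form on ℂ^{n+1}. (That is, J parameterizes an embedded Lagrangian submanifold of ℂ^{n+1}.) -/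
open scoped BigOperators

/-- Standard symplectic form on `ℂ^N`: `ω(u, v) = Im (∑ conj (u j) * v j)`. -/
noncomputable def stdSymp (N : ℕ) (u v : Fin N → ℂ) : ℝ :=
  (∑ j, (starRingEnd ℂ) (u j) * v j).im

/-- Standard symplectic form on `ℂ^n × ℂ`, identified with `ℂ^{n+1}` coordinatewise. -/
noncomputable def sympPC (n : ℕ) (u v : (Fin n → ℂ) × ℂ) : ℝ :=
  stdSymp n u.1 v.1 + ((starRingEnd ℂ) u.2 * v.2).im

/-- `σ_j = 1` for `1 ≤ j ≤ k`, `σ_j = −1` for `k < j ≤ n`; here `j : Fin n` denotes the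
coordinate index `j + 1 ∈ {1, …, n}`. -/
def sgn (n k : ℕ) (j : Fin n) : ℝ := if (j : ℕ) + 1 ≤ k then 1 else -1

/-- The local Lagrangian surgery trace `J : ℝ^{n+1} → ℂ^n × ℂ`,
`J(x) = ((x_j + 2i σ_j x_j x_0)_{j=1}^n, (x_0² + ∑ σ_j x_j²) − i x_0)`. -/
noncomputable def surgeryTrace (n k : ℕ) (x : Fin (n + 1) → ℝ) : (Fin n → ℂ) × ℂ :=
  (fun j => (x j.succ : ℂ) + 2 * Complex.I * (sgn n k j : ℂ) * (x j.succ : ℂ) * (x 0 : ℂ),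
   (((x 0) ^ 2 + ∑ j, sgn n k j * (x j.succ) ^ 2 : ℝ) : ℂ) - Complex.I * (x 0 : ℂ))

/-- coordinate projection as a map to `ℂ` -/
noncomputable def pC (n : ℕ) (i : Fin (n + 1)) : (Fin (n + 1) → ℝ) →L[ℝ] ℂ :=
  Complex.ofRealCLM.comp (ContinuousLinearMap.proj i)

/-- derivative of the first component of the surgery trace -/
noncomputable def D1 (n k : ℕ) (x : Fin (n + 1) → ℝ) :
    (Fin (n + 1) → ℝ) →L[ℝ] (Fin n → ℂ) :=
  ContinuousLinearMap.pi fun j =>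
    pC n j.succ +
      ((2 * Complex.I * (sgn n k j : ℂ) * (x j.succ : ℂ)) • pC n 0 +
        (x 0 : ℂ) • ((2 * Complex.I * (sgn n k j : ℂ)) • pC n j.succ))

/-- derivative of the real part of the second component -/
noncomputable def Dg (n k : ℕ) (x : Fin (n + 1) → ℝ) : (Fin (n + 1) → ℝ) →L[ℝ] ℝ :=
  (x 0 • ContinuousLinearMap.proj 0 + x 0 • ContinuousLinearMap.proj 0) +
    ∑ j : Fin n, sgn n k j •
      (x j.succ • ContinuousLinearMap.proj j.succ + x j.succ • ContinuousLinearMap.proj j.succ)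

/-- derivative of the second component -/
noncomputable def D2 (n k : ℕ) (x : Fin (n + 1) → ℝ) : (Fin (n + 1) → ℝ) →L[ℝ] ℂ :=
  Complex.ofRealCLM.comp (Dg n k x) - Complex.I • pC n 0

lemma hasFD (n k : ℕ) (x : Fin (n + 1) → ℝ) :
    HasFDerivAt (surgeryTrace n k) ((D1 n k x).prod (D2 n k x)) x := by
  have hp : ∀ i : Fin (n + 1),
      HasFDerivAt (fun y : Fin (n + 1) → ℝ => (y i : ℂ)) (pC n i) x :=
    fun i => (pC n i).hasFDerivAt
  have hP : ∀ i : Fin (n + 1),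
      HasFDerivAt (fun y : Fin (n + 1) → ℝ => y i)
        (ContinuousLinearMap.proj (R := ℝ) (φ := fun _ : Fin (n + 1) => ℝ) i) x :=
    fun i => (ContinuousLinearMap.proj (R := ℝ) (φ := fun _ : Fin (n + 1) => ℝ) i).hasFDerivAt
  have h1 : HasFDerivAt
      (fun y : Fin (n + 1) → ℝ => fun j : Fin n =>
        (y j.succ : ℂ) + 2 * Complex.I * (sgn n k j : ℂ) * (y j.succ : ℂ) * (y 0 : ℂ))
      (D1 n k x) x := by
    apply hasFDerivAt_pi.2
    intro j
    exact (hp j.succ).add (((hp j.succ).const_mul (2 * Complex.I * (sgn n k j : ℂ))).mul (hp 0))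
  have hg : HasFDerivAt
      (fun y : Fin (n + 1) → ℝ => (y 0) ^ 2 + ∑ j, sgn n k j * (y j.succ) ^ 2)
      (Dg n k x) x := by
    simp only [pow_two]
    exact ((hP 0).mul (hP 0)).add
      (HasFDerivAt.fun_sum fun j _ => (((hP j.succ).mul (hP j.succ)).const_mul (sgn n k j)))
  have h2 : HasFDerivAt
      (fun y : Fin (n + 1) → ℝ =>
        (((y 0) ^ 2 + ∑ j, sgn n k j * (y j.succ) ^ 2 : ℝ) : ℂ) - Complex.I * (y 0 : ℂ))
      (D2 n k x) x := by
    have hI : HasFDerivAt (fun y : Fin (n + 1) → ℝ => Complex.I * (y 0 : ℂ))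
        (Complex.I • pC n 0) x := (hp 0).const_mul Complex.I
    exact (Complex.ofRealCLM.hasFDerivAt.comp x hg).sub hI
  exact h1.prodMk h2

lemma fderivSurgery_eq (n k : ℕ) (x : Fin (n + 1) → ℝ) :
    fderiv ℝ (surgeryTrace n k) x = (D1 n k x).prod (D2 n k x) :=
  (hasFD n k x).fderiv

lemma D1_apply (n k : ℕ) (x v : Fin (n + 1) → ℝ) (j : Fin n) :
    D1 n k x v j = (v j.succ : ℂ) + (2 * Complex.I * (sgn n k j : ℂ) * (x j.succ : ℂ)) * (v 0 : ℂ)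
      + (x 0 : ℂ) * ((2 * Complex.I * (sgn n k j : ℂ)) * (v j.succ : ℂ)) := by
  simp [D1, pC, smul_eq_mul, add_assoc]

lemma Dg_apply (n k : ℕ) (x v : Fin (n + 1) → ℝ) :
    Dg n k x v = (x 0 * v 0 + x 0 * v 0)
      + ∑ j : Fin n, sgn n k j * (x j.succ * v j.succ + x j.succ * v j.succ) := by
  simp [Dg, mul_add, smul_eq_mul]

lemma D2_apply (n k : ℕ) (x v : Fin (n + 1) → ℝ) :
    D2 n k x v = ((Dg n k x v : ℝ) : ℂ) - Complex.I * (v 0 : ℂ) := by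
  simp [D2, pC, smul_eq_mul]

/-- The local Lagrangian surgery trace is injective, is an immersion (its Fréchet derivative is
injective at every point), and its image distribution is isotropic for the standard symplectic
form on `ℂ^n × ℂ ≅ ℂ^{n+1}`: it parameterizes an embedded Lagrangian submanifold. -/
theorem stmt0 (n k : ℕ) (hn : 1 ≤ n) (hk : k ≤ n) :
    Function.Injective (surgeryTrace n k) ∧
    (∀ x : Fin (n + 1) → ℝ, Function.Injective (fderiv ℝ (surgeryTrace n k) x)) ∧
    (∀ x v w : Fin (n + 1) → ℝ,
      sympPC n (fderiv ℝ (surgeryTrace n k) x v) (fderiv ℝ (surgeryTrace n k) x w) = 0) := by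
  refine ⟨?_, ?_, ?_⟩
  · -- injectivity of the surgery trace
    intro x y h
    have h1 := congrArg Prod.fst h
    have h2 := congrArg Prod.snd h
    simp only [surgeryTrace] at h1 h2
    have h0 : x 0 = y 0 := by
      have := congrArg Complex.im h2
      simp only [Complex.sub_im, Complex.add_im, Complex.ofReal_im, Complex.mul_im,
        Complex.I_re, Complex.I_im, Complex.ofReal_re, Complex.ofReal_pow] at this
      simp at this
      linarith
    have hs : ∀ j : Fin n, x j.succ = y j.succ := by
      intro j
      have := congrArg Complex.re (congrFun h1 j)
      simpa using this
    funext i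
    exact Fin.cases h0 hs i
  · -- injectivity of the derivative
    intro x
    rw [fderivSurgery_eq]
    intro v w h
    simp only [ContinuousLinearMap.prod_apply, Prod.mk.injEq] at h
    obtain ⟨h1, h2⟩ := h
    have h0 : v 0 = w 0 := by
      have := congrArg Complex.im h2
      simpa [D2_apply] using this
    have hs : ∀ j : Fin n, v j.succ = w j.succ := by
      intro j
      have := congrArg Complex.re (congrFun h1 j)
      simpa [D1_apply] using this
    funext i
    exact Fin.cases h0 hs i
  · -- isotropy
    intro x v w
    rw [fderivSurgery_eq]
    simp only [ContinuousLinearMap.prod_apply, sympPC, stdSymp]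
    have key : ∀ j : Fin n, ((starRingEnd ℂ) (D1 n k x v j) * D1 n k x w j).im
        = 2 * sgn n k j * x j.succ * (v j.succ * w 0 - v 0 * w j.succ) := by
      intro j
      simp [D1_apply, Complex.ext_iff]
      ring
    have key2 : ((starRingEnd ℂ) (D2 n k x v) * D2 n k x w).im
        = ∑ j : Fin n, 2 * sgn n k j * x j.succ * (v 0 * w j.succ - v j.succ * w 0) := by
      have : ((starRingEnd ℂ) (D2 n k x v) * D2 n k x w).im
          = v 0 * Dg n k x w - Dg n k x v * w 0 := by
        simp [D2_apply]
        ring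
      rw [this, Dg_apply, Dg_apply]
      have hsum : v 0 * (∑ j : Fin n, sgn n k j * (x j.succ * w j.succ + x j.succ * w j.succ))
          - (∑ j : Fin n, sgn n k j * (x j.succ * v j.succ + x j.succ * v j.succ)) * w 0
          = ∑ j : Fin n, 2 * sgn n k j * x j.succ * (v 0 * w j.succ - v j.succ * w 0) := by
        rw [Finset.mul_sum, Finset.sum_mul, ← Finset.sum_sub_distrib]
        exact Finset.sum_congr rfl fun j _ => by ring
      linear_combination hsum
    rw [Complex.im_sum, key2, Finset.sum_congr rfl (fun j _ => key j), ← Finset.sum_add_distrib]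
    exact Finset.sum_eq_zero fun j _ => by ring
end

section
/- For all integers n ≥ 1 and 0 ≤ k ≤ n and all x, y ∈ Q⁺ with x ≠ y: π(J(x)) = π(J(y)) if and only if {x, y} = {e, −e}, where e = (1, 0, …, 0) ∈ ℝ^{n+1}. (The positive slice of the local surgery trace has exactly one self-intersection, occurring at the two points (±1, 0, …, 0).) -/
open scoped BigOperators

/-- The positive slice domain `Q⁺ = {x ∈ ℝ^{n+1} : x_0² + ∑ σ_j x_j² = 1}`. -/
def Qpos (n k : ℕ) : Set (Fin (n + 1) → ℝ) :=
  {x | (x 0) ^ 2 + ∑ j, sgn n k j * (x j.succ) ^ 2 = 1}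

/-- The positive slice of the local surgery trace has exactly one self-intersection, occurring
at the two points `(±1, 0, …, 0)`: for distinct `x, y ∈ Q⁺`, `π(J(x)) = π(J(y))` iff
`{x, y} = {e, −e}` where `e = (1, 0, …, 0)`. -/
theorem stmt1 (n k : ℕ) (hn : 1 ≤ n) (hk : k ≤ n)
    (x y : Fin (n + 1) → ℝ) (hx : x ∈ Qpos n k) (hy : y ∈ Qpos n k) (hxy : x ≠ y) :
    (surgeryTrace n k x).1 = (surgeryTrace n k y).1 ↔
      ({x, y} : Set (Fin (n + 1) → ℝ)) =
        {Pi.single (0 : Fin (n + 1)) (1 : ℝ), -(Pi.single (0 : Fin (n + 1)) (1 : ℝ))} := by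
  have hs : ∀ j : Fin n, sgn n k j ≠ 0 := by
    intro j; unfold sgn; split <;> norm_num
  have es : ∀ j : Fin n, (Pi.single (0 : Fin (n+1)) (1:ℝ) : Fin (n+1) → ℝ) j.succ = 0 := by
    intro j; simp [Pi.single_apply, Fin.succ_ne_zero j]
  constructor
  · intro h
    have hco : ∀ j : Fin n, x j.succ = y j.succ ∧ x j.succ * x 0 = y j.succ * y 0 := by
      intro j
      have hj := congrFun h j
      simp only [surgeryTrace] at hj
      rw [Complex.ext_iff] at hj
      simp at hj
      obtain ⟨h1, h2⟩ := hj
      exact ⟨h1, mul_left_cancel₀ (mul_ne_zero two_ne_zero (hs j)) (by linear_combination h2)⟩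
    have h0 : x 0 ≠ y 0 := by
      intro h00
      apply hxy
      funext i
      refine Fin.cases h00 (fun j => (hco j).1) i
    have hz : ∀ j : Fin n, x j.succ = 0 := by
      intro j
      obtain ⟨h1, h2⟩ := hco j
      by_contra hne
      rw [← h1] at h2
      exact h0 (mul_left_cancel₀ hne h2)
    have hzy : ∀ j : Fin n, y j.succ = 0 := by
      intro j; rw [← (hco j).1]; exact hz j
    have hx1' : x 0 = 1 ∨ x 0 = -1 := by
      have := hx; simp only [Qpos, Set.mem_setOf_eq] at this
      have h2 : (x 0) ^ 2 = 1 := by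
        rw [← this]; simp [hz]
      have h3 : (x 0 - 1) * (x 0 + 1) = 0 := by nlinarith [h2]
      rcases mul_eq_zero.1 h3 with h' | h'
      · left; linarith
      · right; linarith
    have hy1' : y 0 = 1 ∨ y 0 = -1 := by
      have := hy; simp only [Qpos, Set.mem_setOf_eq] at this
      have h2 : (y 0) ^ 2 = 1 := by
        rw [← this]; simp [hzy]
      have h3 : (y 0 - 1) * (y 0 + 1) = 0 := by nlinarith [h2]
      rcases mul_eq_zero.1 h3 with h' | h'
      · left; linarith
      · right; linarith
    have hxe : ∀ v : Fin (n+1) → ℝ, v 0 = 1 → (∀ j : Fin n, v j.succ = 0) →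
        v = (Pi.single (0 : Fin (n+1)) (1:ℝ) : Fin (n+1) → ℝ) := by
      intro v hv0 hvz
      funext i
      refine Fin.cases ?_ (fun j => ?_) i
      · simp [hv0]
      · simp [hvz j, es j]
    have hxe' : ∀ v : Fin (n+1) → ℝ, v 0 = -1 → (∀ j : Fin n, v j.succ = 0) →
        v = -(Pi.single (0 : Fin (n+1)) (1:ℝ) : Fin (n+1) → ℝ) := by
      intro v hv0 hvz
      funext i
      refine Fin.cases ?_ (fun j => ?_) i
      · simp [hv0]
      · simp [hvz j, es j]
    rcases hx1' with hx0 | hx0 <;> rcases hy1' with hy0 | hy0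
    · exact absurd (hx0.trans hy0.symm) h0
    · rw [hxe x hx0 hz, hxe' y hy0 hzy]
    · rw [hxe' x hx0 hz, hxe y hy0 hzy, Set.pair_comm]
    · exact absurd (hx0.trans hy0.symm) h0
  · intro h
    have hxm : x ∈ ({(Pi.single (0 : Fin (n+1)) (1:ℝ) : Fin (n+1) → ℝ), -(Pi.single (0 : Fin (n+1)) (1:ℝ) : Fin (n+1) → ℝ)} :
        Set (Fin (n+1) → ℝ)) := h ▸ Set.mem_insert x {y}
    have hym : y ∈ ({(Pi.single (0 : Fin (n+1)) (1:ℝ) : Fin (n+1) → ℝ), -(Pi.single (0 : Fin (n+1)) (1:ℝ) : Fin (n+1) → ℝ)} :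
        Set (Fin (n+1) → ℝ)) := h ▸ Set.mem_insert_of_mem x rfl
    have hxz : ∀ j : Fin n, x j.succ = 0 := by
      rcases hxm with h' | h' <;> intro j <;> rw [h'] <;> simp [es j]
    have hyz : ∀ j : Fin n, y j.succ = 0 := by
      rcases hym with h' | h' <;> intro j <;> rw [h'] <;> simp [es j]
    funext j
    simp [surgeryTrace, hxz j, hyz j]
end

section
/- For all integers n ≥ 1 and 0 ≤ k ≤ n, the map x ↦ π(J(x)) is injective on Q⁻. (The negative slice of the local surgery trace is an embedded Lagrangian submanifold.) -/
open scoped BigOperators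

/-- The negative slice domain `Q⁻ = {x ∈ ℝ^{n+1} : x_0² + ∑ σ_j x_j² = −1}`. -/
def Qneg (n k : ℕ) : Set (Fin (n + 1) → ℝ) :=
  {x | (x 0) ^ 2 + ∑ j, sgn n k j * (x j.succ) ^ 2 = -1}

/-- The negative slice of the local surgery trace is embedded: `x ↦ π(J(x))` is injective
on `Q⁻`. -/
theorem stmt2 (n k : ℕ) (hn : 1 ≤ n) (hk : k ≤ n) :
    Set.InjOn (fun x => (surgeryTrace n k x).1) (Qneg n k) := by
  intro x hx y hy h
  simp only [surgeryTrace] at h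
  have key : ∀ j : Fin n, x j.succ = y j.succ ∧ x j.succ * x 0 = y j.succ * y 0 := by
    intro j
    have hj := congrFun h j
    rw [Complex.ext_iff] at hj
    simp only [Complex.add_re, Complex.add_im, Complex.mul_re, Complex.mul_im,
      Complex.I_re, Complex.I_im, Complex.ofReal_re, Complex.ofReal_im,
      Complex.re_ofNat, Complex.im_ofNat] at hj
    obtain ⟨h1, h2⟩ := hj
    have hs : sgn n k j = 1 ∨ sgn n k j = -1 := by
      unfold sgn; split <;> simp
    constructor
    · nlinarith [h1, h2]
    · rcases hs with hs | hs <;> rw [hs] at h2 <;> nlinarith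
  have hx0 : ∃ j : Fin n, x j.succ ≠ 0 := by
    by_contra hc
    push_neg at hc
    have : (x 0) ^ 2 + ∑ j, sgn n k j * (x j.succ) ^ 2 = (x 0) ^ 2 := by
      simp [hc]
    rw [Qneg, Set.mem_setOf_eq, this] at hx
    nlinarith [sq_nonneg (x 0)]
  obtain ⟨j0, hj0⟩ := hx0
  have h0 : x 0 = y 0 := by
    have := (key j0).2
    rw [(key j0).1] at this hj0
    exact mul_left_cancel₀ hj0 this
  funext i
  refine Fin.cases ?_ ?_ i
  · exact h0
  · exact fun j => (key j).1
end

section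
/- For all integers n ≥ 1 and 0 ≤ k ≤ n, let e = (1, 0, …, 0) ∈ ℝ^{n+1}, so that e, −e ∈ Q⁺ and the tangent space of Q⁺ at ±e is T = {v ∈ ℝ^{n+1} : v_0 = 0}. Then the real subspaces D(π∘J)_e(T) = {(v_j(1 + 2i·σ_j))_{j=1}^n : v ∈ ℝ^n} and D(π∘J)_{−e}(T) = {(v_j(1 − 2i·σ_j))_{j=1}^n : v ∈ ℝ^n} of ℂ^n (viewed as a real vector space) are complementary: their intersection is {0} and their sum is all of ℂ^n. (The unique self-intersection of the positive slice of the surgery trace is transverse.) -/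
open scoped BigOperators

lemma key (n k : ℕ) (p : Fin (n+1) → ℝ) (hp : ∀ j : Fin n, p j.succ = 0) :
    fderiv ℝ (fun x => (surgeryTrace n k x).1) p =
    ContinuousLinearMap.pi (fun j : Fin n =>
      ((1 : ℂ) + 2*Complex.I*(sgn n k j : ℂ) * (p 0 : ℂ)) •
        (Complex.ofRealCLM.comp (ContinuousLinearMap.proj j.succ))) := by
  apply HasFDerivAt.fderiv
  rw [hasFDerivAt_pi']
  intro j
  have heq : (fun x : Fin (n+1) → ℝ => (surgeryTrace n k x).1 j) =
      fun x => ((x j.succ : ℝ) : ℂ) * (1 + (2*Complex.I*(sgn n k j : ℂ)) * (x 0 : ℂ)) := by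
    funext x; simp [surgeryTrace]; ring
  rw [heq, ContinuousLinearMap.proj_pi]
  have hu : HasFDerivAt (fun x : Fin (n+1) → ℝ => ((x j.succ : ℝ) : ℂ))
      (Complex.ofRealCLM.comp (ContinuousLinearMap.proj j.succ)) p := by
    exact (Complex.ofRealCLM.comp
      (ContinuousLinearMap.proj j.succ : (Fin (n+1) → ℝ) →L[ℝ] ℝ)).hasFDerivAt (x := p)
  have hw : HasFDerivAt (fun x : Fin (n+1) → ℝ => (1 : ℂ) + (2*Complex.I*(sgn n k j : ℂ)) * (x 0 : ℂ))
      ((2*Complex.I*(sgn n k j : ℂ)) • (Complex.ofRealCLM.comp (ContinuousLinearMap.proj 0))) p := by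
    have h0 : HasFDerivAt (fun x : Fin (n+1) → ℝ => ((x 0 : ℝ) : ℂ))
        (Complex.ofRealCLM.comp (ContinuousLinearMap.proj 0)) p := by
      exact (Complex.ofRealCLM.comp
        (ContinuousLinearMap.proj 0 : (Fin (n+1) → ℝ) →L[ℝ] ℝ)).hasFDerivAt (x := p)
    exact (h0.const_mul (2*Complex.I*(sgn n k j : ℂ))).const_add 1
  have := hu.mul hw
  simp only [hp j, Complex.ofReal_zero, zero_smul, zero_add] at this
  refine this.congr_fderiv ?_
  ext v
  simp

lemma image_eq (n k : ℕ) (p : Fin (n+1) → ℝ) (hp : ∀ j : Fin n, p j.succ = 0) :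
    fderiv ℝ (fun x => (surgeryTrace n k x).1) p '' {v | v 0 = 0} =
    {z | ∃ v : Fin n → ℝ, ∀ j, z j = (v j : ℂ) * (1 + 2 * Complex.I * (sgn n k j : ℂ) * (p 0 : ℂ))} := by
  rw [key n k p hp]
  ext z
  constructor
  · rintro ⟨v, -, rfl⟩
    exact ⟨fun j => v j.succ, fun j => by simp [mul_comm]⟩
  · rintro ⟨w, hw⟩
    refine ⟨Fin.cons 0 w, rfl, ?_⟩
    funext j
    simp [hw j, mul_comm]

/-- The unique self-intersection of the positive slice of the surgery trace is transverse:
with `e = (1,0,…,0)` (so `e, -e ∈ Q⁺`, with tangent space `T = {v : v_0 = 0}` at `±e`), the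
images of `T` under `D(π∘J)` at `e` and at `−e` are the explicitly given real subspaces
`{(v_j(1 + 2iσ_j))_j}` and `{(v_j(1 − 2iσ_j))_j}` of `ℂ^n`, which are complementary. -/
theorem stmt3 (n k : ℕ) (hn : 1 ≤ n) (hk : k ≤ n) :
    let e : Fin (n + 1) → ℝ := Pi.single 0 1
    let T : Set (Fin (n + 1) → ℝ) := {v | v 0 = 0}
    let A : Set (Fin n → ℂ) := fderiv ℝ (fun x => (surgeryTrace n k x).1) e '' T
    let B : Set (Fin n → ℂ) := fderiv ℝ (fun x => (surgeryTrace n k x).1) (-e) '' T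
    e ∈ Qpos n k ∧ (-e) ∈ Qpos n k ∧
    A = {z | ∃ v : Fin n → ℝ, ∀ j, z j = (v j : ℂ) * (1 + 2 * Complex.I * (sgn n k j : ℂ))} ∧
    B = {z | ∃ v : Fin n → ℝ, ∀ j, z j = (v j : ℂ) * (1 - 2 * Complex.I * (sgn n k j : ℂ))} ∧
    A ∩ B = {0} ∧
    (∀ z : Fin n → ℂ, ∃ a ∈ A, ∃ b ∈ B, z = a + b) := by
  intro e T A B
  have he0 : e 0 = 1 := Pi.single_eq_same 0 1
  have hes : ∀ j : Fin n, e j.succ = 0 := fun j => Pi.single_eq_of_ne (Fin.succ_ne_zero j) 1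
  have hes' : ∀ j : Fin n, (-e) j.succ = 0 := fun j => by simp [hes j]
  have hσ : ∀ j : Fin n, sgn n k j = 1 ∨ sgn n k j = -1 := by
    intro j; unfold sgn; split <;> simp
  have hA : A = {z | ∃ v : Fin n → ℝ, ∀ j, z j = (v j : ℂ) * (1 + 2 * Complex.I * (sgn n k j : ℂ))} := by
    have := image_eq n k e hes
    simp only [he0, Complex.ofReal_one, mul_one] at this
    exact this
  have hB : B = {z | ∃ v : Fin n → ℝ, ∀ j, z j = (v j : ℂ) * (1 - 2 * Complex.I * (sgn n k j : ℂ))} := by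
    have := image_eq n k (-e) hes'
    simp only [Pi.neg_apply, he0, Complex.ofReal_neg, Complex.ofReal_one] at this
    refine this.trans ?_
    ext z
    constructor <;> rintro ⟨v, hv⟩ <;> exact ⟨v, fun j => by rw [hv j]; ring_nf⟩
  refine ⟨?_, ?_, hA, hB, ?_, ?_⟩
  · show (e 0)^2 + ∑ j, sgn n k j * (e j.succ)^2 = 1
    simp [he0, hes]
  · show ((-e) 0)^2 + ∑ j, sgn n k j * ((-e) j.succ)^2 = 1
    simp [he0, hes]
  · rw [hA, hB]
    ext z
    simp only [Set.mem_inter_iff, Set.mem_setOf_eq, Set.mem_singleton_iff]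
    constructor
    · rintro ⟨⟨a, ha⟩, ⟨b, hb⟩⟩
      funext j
      have h : (a j : ℂ) * (1 + 2 * Complex.I * (sgn n k j : ℂ)) =
          (b j : ℂ) * (1 - 2 * Complex.I * (sgn n k j : ℂ)) := by rw [← ha j, ← hb j]
      rcases hσ j with hs | hs <;>
      · rw [hs] at h
        rw [Complex.ext_iff] at h
        simp at h
        have ha0 : a j = 0 := by linarith [h.1, h.2]
        rw [ha j, ha0]
        simp
    · rintro rfl
      exact ⟨⟨0, fun j => by simp⟩, ⟨0, fun j => by simp⟩⟩
  · intro z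
    rw [hA, hB]
    refine ⟨fun j => ((((z j).re / 2 + sgn n k j * (z j).im / 4 : ℝ)) : ℂ) *
        (1 + 2 * Complex.I * (sgn n k j : ℂ)),
      ⟨fun j => (z j).re / 2 + sgn n k j * (z j).im / 4, fun j => rfl⟩,
      fun j => ((((z j).re / 2 - sgn n k j * (z j).im / 4 : ℝ)) : ℂ) *
        (1 - 2 * Complex.I * (sgn n k j : ℂ)),
      ⟨fun j => (z j).re / 2 - sgn n k j * (z j).im / 4, fun j => rfl⟩, ?_⟩
    funext j
    have hs2 : sgn n k j * sgn n k j = 1 := by rcases hσ j with hs | hs <;> rw [hs] <;> ring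
    simp only [Pi.add_apply]
    rcases hσ j with hs | hs <;>
    · rw [hs]
      apply Complex.ext <;>
        simp [Complex.add_re, Complex.add_im, Complex.mul_re, Complex.mul_im] <;> ring
end

section
/- For all integers n ≥ 1 and 0 ≤ k ≤ n: (a) a point z ∈ ℂ^n lies in π(J(Q⁺)) and satisfies z_j = 0 for all k < j ≤ n if and only if there exists u = (u_0, u_1, …, u_k) ∈ ℝ^{k+1} with ‖u‖ = 1 such that z_j = u_j + 2i·u_0·u_j for 1 ≤ j ≤ k and z_j = 0 for k < j ≤ n; (b) there is no x ∈ Q⁻ with (π(J(x)))_j = 0 for all k < j ≤ n. (The positive slice of the surgery trace meets ℂ^k × {0} exactly in the Whitney k-sphere of radius 1, while the negative slice is disjoint from ℂ^k × {0}.) -/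
open scoped BigOperators

private lemma re_zero (s a b : ℝ)
    (h : (a : ℂ) + 2 * Complex.I * (s : ℂ) * (a : ℂ) * (b : ℂ) = 0) : a = 0 := by
  have := congrArg Complex.re h
  simpa using this

private lemma norm_eq_one_iff {k : ℕ} (u : EuclideanSpace ℝ (Fin (k+1))) :
    ‖u‖ = 1 ↔ ∑ i, (u i) ^ 2 = 1 := by
  rw [EuclideanSpace.norm_eq]
  simp only [Real.norm_eq_abs, sq_abs]
  constructor
  · intro h
    have h0 : 0 ≤ ∑ i, (u i)^2 := Finset.sum_nonneg fun i _ => sq_nonneg _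
    nlinarith [Real.sq_sqrt h0, Real.sqrt_nonneg (∑ i, (u i)^2)]
  · intro h; rw [h, Real.sqrt_one]

private lemma sum_key (n k : ℕ) (hk : k ≤ n) (y : ℕ → ℝ)
    (hy : ∀ m, m < n → k < m + 1 → y (m + 1) = 0) :
    ∑ j : Fin n, sgn n k j * (y ((j : ℕ) + 1)) ^ 2 = ∑ m ∈ Finset.range k, y (m + 1) ^ 2 := by
  have h1 : ∑ j : Fin n, sgn n k j * (y ((j : ℕ) + 1)) ^ 2
      = ∑ m ∈ Finset.range n, (if m + 1 ≤ k then (1:ℝ) else -1) * y (m + 1) ^ 2 := by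
    rw [← Fin.sum_univ_eq_sum_range (fun m => (if m + 1 ≤ k then (1:ℝ) else -1) * y (m + 1) ^ 2) n]
    rfl
  have h2 : ∑ m ∈ Finset.range n, (if m + 1 ≤ k then (1:ℝ) else -1) * y (m + 1) ^ 2
      = ∑ m ∈ Finset.range k, (if m + 1 ≤ k then (1:ℝ) else -1) * y (m + 1) ^ 2 := by
    refine (Finset.sum_subset (Finset.range_subset_range.2 hk) ?_).symm
    intro m hm hmk
    have h3 : ¬ (m + 1 ≤ k) := by
      simp only [Finset.mem_range] at hm hmk; omega
    rw [if_neg h3, hy m (Finset.mem_range.1 hm) (by omega)]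
    ring
  rw [h1, h2]
  refine Finset.sum_congr rfl fun m hm => ?_
  rw [if_pos (show m + 1 ≤ k from Finset.mem_range.1 hm)]
  ring

private lemma qsum (n k : ℕ) (hk : k ≤ n) (x : Fin (n+1) → ℝ)
    (hx0 : ∀ j : Fin n, k < (j : ℕ) + 1 → x j.succ = 0)
    (u : Fin (k+1) → ℝ)
    (hxu : ∀ i : Fin (k+1), u i = x ⟨i, lt_of_lt_of_le i.2 (Nat.succ_le_succ hk)⟩) :
    (x 0)^2 + ∑ j : Fin n, sgn n k j * (x j.succ)^2 = ∑ i, (u i)^2 := by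
  set y : ℕ → ℝ := fun m => if h : m < n + 1 then x ⟨m, h⟩ else 0 with hy
  have hyx : ∀ j : Fin n, y ((j : ℕ) + 1) = x j.succ := by
    intro j
    have : (j : ℕ) + 1 < n + 1 := Nat.succ_lt_succ j.2
    simp only [hy, dif_pos this]
    rfl
  have hzero : ∀ m, m < n → k < m + 1 → y (m + 1) = 0 := by
    intro m hm hkm
    rw [show (m + 1) = ((⟨m, hm⟩ : Fin n) : ℕ) + 1 from rfl, hyx ⟨m, hm⟩]
    exact hx0 ⟨m, hm⟩ hkm
  have hu : ∀ i : Fin (k+1), u i = y (i : ℕ) := by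
    intro i
    have : (i : ℕ) < n + 1 := lt_of_lt_of_le i.2 (Nat.succ_le_succ hk)
    simp only [hy, dif_pos this]
    exact hxu i
  calc (x 0)^2 + ∑ j : Fin n, sgn n k j * (x j.succ)^2
      = y 0 ^ 2 + ∑ j : Fin n, sgn n k j * (y ((j:ℕ)+1))^2 := by
        simp only [hyx]
        congr 1
    _ = y 0 ^ 2 + ∑ m ∈ Finset.range k, y (m+1)^2 := by rw [sum_key n k hk y hzero]
    _ = ∑ m ∈ Finset.range (k+1), y m ^ 2 := by rw [Finset.sum_range_succ']; ring
    _ = ∑ i : Fin (k+1), y (i:ℕ) ^ 2 := (Fin.sum_univ_eq_sum_range (fun m => y m ^2) (k+1)).symm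
    _ = ∑ i, (u i)^2 := by simp only [hu]

/-- (a) The positive slice of the surgery trace meets `ℂ^k × {0} ⊆ ℂ^n` exactly in the Whitney
`k`-sphere of radius 1: `z ∈ π(J(Q⁺))` with `z_j = 0` for `k < j ≤ n` iff there is a unit
vector `u ∈ ℝ^{k+1}` with `z_j = u_j + 2i·u_0·u_j` for `1 ≤ j ≤ k` and `z_j = 0` for
`k < j ≤ n`.  (b) The negative slice is disjoint from `ℂ^k × {0}`. -/
theorem stmt4 (n k : ℕ) (hn : 1 ≤ n) (hk : k ≤ n) :
    (∀ z : Fin n → ℂ,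
      ((∃ x ∈ Qpos n k, (surgeryTrace n k x).1 = z) ∧
          (∀ j : Fin n, k < (j : ℕ) + 1 → z j = 0)) ↔
        (∃ u : EuclideanSpace ℝ (Fin (k + 1)), ‖u‖ = 1 ∧
          (∀ j : Fin n, ∀ h : (j : ℕ) + 1 ≤ k,
            z j = (u ⟨(j : ℕ) + 1, Nat.lt_succ_of_le h⟩ : ℂ) +
              2 * Complex.I * (u 0 : ℂ) * (u ⟨(j : ℕ) + 1, Nat.lt_succ_of_le h⟩ : ℂ)) ∧
          (∀ j : Fin n, k < (j : ℕ) + 1 → z j = 0))) ∧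
    ¬ ∃ x ∈ Qneg n k, ∀ j : Fin n, k < (j : ℕ) + 1 → (surgeryTrace n k x).1 j = 0 := by
  constructor
  · intro z
    constructor
    · rintro ⟨⟨x, hx, hxz⟩, hz0⟩
      have hx0 : ∀ j : Fin n, k < (j : ℕ) + 1 → x j.succ = 0 := by
        intro j hj
        have hzj : (surgeryTrace n k x).1 j = 0 := by rw [hxz]; exact hz0 j hj
        exact re_zero _ _ _ hzj
      set u : EuclideanSpace ℝ (Fin (k+1)) :=
        WithLp.toLp 2 (fun i : Fin (k+1) => x ⟨i, lt_of_lt_of_le i.2 (Nat.succ_le_succ hk)⟩) with hudef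
      have hxu : ∀ i : Fin (k+1), u i = x ⟨i, lt_of_lt_of_le i.2 (Nat.succ_le_succ hk)⟩ :=
        fun i => rfl
      have hsum := qsum n k hk x hx0 u hxu
      have hnorm : ‖u‖ = 1 := by
        rw [norm_eq_one_iff]
        rw [← hsum]
        exact hx
      have hu0 : (u 0 : ℝ) = x 0 := by
        simp only [hudef]
        congr 1
      refine ⟨u, hnorm, ?_, hz0⟩
      intro j h
      have hj1 : ((⟨(j : ℕ) + 1, Nat.lt_succ_of_le h⟩ : Fin (k+1)) : ℕ) < n + 1 :=
        Nat.succ_lt_succ j.2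
      have huj : u ⟨(j : ℕ) + 1, Nat.lt_succ_of_le h⟩ = x j.succ := by
        rw [hxu]
        congr 1
      have hzj : z j = (surgeryTrace n k x).1 j := by rw [hxz]
      rw [hzj, huj, hu0]
      show (x j.succ : ℂ) + 2 * Complex.I * (sgn n k j : ℂ) * (x j.succ : ℂ) * (x 0 : ℂ) = _
      rw [show sgn n k j = 1 from if_pos h]
      push_cast
      ring
    · rintro ⟨u, hu, huz, hz0⟩
      set x : Fin (n+1) → ℝ :=
        fun i => if h : (i : ℕ) < k + 1 then u ⟨i, h⟩ else 0 with hxdef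
      have hx0 : ∀ j : Fin n, k < (j : ℕ) + 1 → x j.succ = 0 := by
        intro j hj
        simp only [hxdef]
        rw [dif_neg]
        show ¬ ((j : ℕ) + 1 < k + 1)
        omega
      have hxu : ∀ i : Fin (k+1), u i = x ⟨i, lt_of_lt_of_le i.2 (Nat.succ_le_succ hk)⟩ := by
        intro i
        simp only [hxdef]
        rw [dif_pos i.2]
      have hx00 : x 0 = u 0 := by
        simp only [hxdef, Fin.val_zero]
        refine (dif_pos (Nat.succ_pos k)).trans ?_
        exact congrArg u (Fin.ext rfl)
      have hsum := qsum n k hk x hx0 u hxu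
      have hQ : x ∈ Qpos n k := by
        show (x 0)^2 + ∑ j, sgn n k j * (x j.succ)^2 = 1
        rw [hsum]
        exact (norm_eq_one_iff u).1 hu
      refine ⟨⟨x, hQ, ?_⟩, hz0⟩
      funext j
      show (x j.succ : ℂ) + 2 * Complex.I * (sgn n k j : ℂ) * (x j.succ : ℂ) * (x 0 : ℂ) = z j
      by_cases h : (j : ℕ) + 1 ≤ k
      · have hxj : x j.succ = u ⟨(j : ℕ) + 1, Nat.lt_succ_of_le h⟩ := by
          rw [hxu ⟨(j : ℕ) + 1, Nat.lt_succ_of_le h⟩]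
          congr 1
        rw [huz j h, hxj, hx00, show sgn n k j = 1 from if_pos h]
        push_cast
        ring
      · have hxj : x j.succ = 0 := hx0 j (by omega)
        rw [hz0 j (by omega), hxj]
        push_cast
        ring
  · rintro ⟨x, hx, hz⟩
    have hx0 : ∀ j : Fin n, k < (j : ℕ) + 1 → x j.succ = 0 := by
      intro j hj
      exact re_zero _ _ _ (hz j hj)
    set u : Fin (k+1) → ℝ := fun i => x ⟨i, lt_of_lt_of_le i.2 (Nat.succ_le_succ hk)⟩ with hudef
    have hsum := qsum n k hk x hx0 u (fun i => rfl)
    have hQ : (x 0)^2 + ∑ j, sgn n k j * (x j.succ)^2 = -1 := hx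
    rw [hsum] at hQ
    have : (0:ℝ) ≤ ∑ i, (u i)^2 := Finset.sum_nonneg fun i _ => sq_nonneg _
    linarith
end

section
/- Let l, n ∈ ℕ, let i : ℝ^l × ℝ → ℂ^n and H : ℝ^l × ℝ → ℝ be smooth, and suppose for every (q, t) ∈ ℝ^l × ℝ: (a) for all v, w ∈ ℝ^l, ω(D_q i(q,t)v, D_q i(q,t)w) = 0; and (b) for all v ∈ ℝ^l, ω(∂_t i(q,t), D_q i(q,t)v) = −(D_q H(q,t))(v). Then the suspension j : ℝ^l × ℝ → ℂ^n × ℂ, j(q, t) = (i(q,t), t + i·H(q,t)), satisfies ω(Dj_{(q,t)} u, Dj_{(q,t)} u') = 0 for every (q,t) and all u, u' ∈ ℝ^l × ℝ, where ℂ^n × ℂ is identified with ℂ^{n+1} and ω denotes the standard symplectic form on the respective space. (The suspension of an exact Lagrangian homotopy is a Lagrangian submanifold.) -/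
open scoped BigOperators

lemma stdSymp_add_left {n : ℕ} (a b c : Fin n → ℂ) :
    stdSymp n (a + b) c = stdSymp n a c + stdSymp n b c := by
  simp [stdSymp, add_mul, Finset.sum_add_distrib]

lemma stdSymp_add_right {n : ℕ} (a b c : Fin n → ℂ) :
    stdSymp n a (b + c) = stdSymp n a b + stdSymp n a c := by
  simp [stdSymp, mul_add, Finset.sum_add_distrib]

lemma stdSymp_smul_left {n : ℕ} (r : ℝ) (a b : Fin n → ℂ) :
    stdSymp n (r • a) b = r * stdSymp n a b := by
  simp only [stdSymp, Pi.smul_apply, Complex.real_smul, map_mul, Complex.conj_ofReal,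
    mul_assoc, ← Finset.mul_sum, Complex.mul_im, Complex.ofReal_re, Complex.ofReal_im, zero_mul, add_zero]

lemma stdSymp_smul_right {n : ℕ} (r : ℝ) (a b : Fin n → ℂ) :
    stdSymp n a (r • b) = r * stdSymp n a b := by
  simp only [stdSymp, Pi.smul_apply, Complex.real_smul, mul_left_comm,
    ← Finset.mul_sum, Complex.mul_im, Complex.ofReal_re, Complex.ofReal_im, zero_mul, add_zero]

lemma stdSymp_skew {n : ℕ} (a b : Fin n → ℂ) :
    stdSymp n a b = - stdSymp n b a := by
  have h : ∑ j, (starRingEnd ℂ) (a j) * b j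
      = (starRingEnd ℂ) (∑ j, (starRingEnd ℂ) (b j) * a j) := by
    simp [map_sum, map_mul, mul_comm]
  rw [stdSymp, stdSymp, h, Complex.conj_im]

lemma stdSymp_expand {n : ℕ} (a a' T : Fin n → ℂ) (s s' : ℝ) :
    stdSymp n (a + s • T) (a' + s' • T)
      = stdSymp n a a' + s' * stdSymp n a T + s * stdSymp n T a'
        + s * s' * stdSymp n T T := by
  rw [stdSymp_add_left, stdSymp_add_right, stdSymp_add_right, stdSymp_smul_left,
    stdSymp_smul_left, stdSymp_smul_right, stdSymp_smul_right]
  ring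

lemma key_im (s x s' x' : ℝ) :
    ((starRingEnd ℂ) ((s:ℂ) + Complex.I * x) * ((s':ℂ) + Complex.I * x')).im
      = s * x' - x * s' := by
  simp [Complex.ext_iff, Complex.mul_im, Complex.add_im, Complex.add_re, Complex.mul_re]
  ring

/-- The suspension of an exact Lagrangian homotopy is a Lagrangian submanifold: if each
`i(·, t)` is isotropic and `H` is a flux primitive for the homotopy `t ↦ i(·, t)`, then the
suspension `j(q, t) = (i(q,t), t + i·H(q,t))` has isotropic derivative everywhere. -/
theorem stmt10 (l n : ℕ)
    (i : (Fin l → ℝ) × ℝ → Fin n → ℂ) (H : (Fin l → ℝ) × ℝ → ℝ)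
    (hi : ContDiff ℝ (⊤ : ℕ∞) i) (hH : ContDiff ℝ (⊤ : ℕ∞) H)
    (ha : ∀ (q : Fin l → ℝ) (t : ℝ) (v w : Fin l → ℝ),
      stdSymp n (fderiv ℝ (fun q' => i (q', t)) q v) (fderiv ℝ (fun q' => i (q', t)) q w) = 0)
    (hb : ∀ (q : Fin l → ℝ) (t : ℝ) (v : Fin l → ℝ),
      stdSymp n (deriv (fun s => i (q, s)) t) (fderiv ℝ (fun q' => i (q', t)) q v)
        = - fderiv ℝ (fun q' => H (q', t)) q v) :
    ∀ (p u u' : (Fin l → ℝ) × ℝ),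
      sympPC n
        (fderiv ℝ (fun qt => (i qt, (qt.2 : ℂ) + Complex.I * (H qt : ℂ))) p u)
        (fderiv ℝ (fun qt => (i qt, (qt.2 : ℂ) + Complex.I * (H qt : ℂ))) p u') = 0 := by
  rintro ⟨q, t⟩ ⟨v, s⟩ ⟨v', s'⟩
  have hid : Differentiable ℝ i := hi.differentiable (by simp)
  have hHd : Differentiable ℝ H := hH.differentiable (by simp)
  set Li := fderiv ℝ i (q, t) with hLi
  set LH := fderiv ℝ H (q, t) with hLH
  -- total derivative of the suspension
  have hsnd : HasFDerivAt (fun qt : (Fin l → ℝ) × ℝ => (qt.2 : ℂ))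
      (Complex.ofRealCLM.comp (ContinuousLinearMap.snd ℝ (Fin l → ℝ) ℝ)) (q, t) :=
    Complex.ofRealCLM.hasFDerivAt.comp _ hasFDerivAt_snd
  have hIH : HasFDerivAt (fun qt : (Fin l → ℝ) × ℝ => Complex.I * (H qt : ℂ))
      (Complex.I • (Complex.ofRealCLM.comp LH)) (q, t) :=
    (Complex.ofRealCLM.hasFDerivAt.comp _ (hHd (q, t)).hasFDerivAt).const_mul Complex.I
  have hj : HasFDerivAt (fun qt => (i qt, (qt.2 : ℂ) + Complex.I * (H qt : ℂ)))
      (Li.prod (Complex.ofRealCLM.comp (ContinuousLinearMap.snd ℝ (Fin l → ℝ) ℝ)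
        + Complex.I • (Complex.ofRealCLM.comp LH))) (q, t) :=
    HasFDerivAt.prodMk (hid (q, t)).hasFDerivAt (hsnd.add hIH)
  -- partial derivatives
  have hqi : fderiv ℝ (fun q' => i (q', t)) q
      = Li.comp (ContinuousLinearMap.inl ℝ (Fin l → ℝ) ℝ) :=
    (HasFDerivAt.comp q (hid (q, t)).hasFDerivAt (hasFDerivAt_prodMk_left q t)).fderiv
  have hti : deriv (fun s => i (q, s)) t = Li ((0 : Fin l → ℝ), (1 : ℝ)) :=
    (HasFDerivAt.comp_hasDerivAt t (hid (q, t)).hasFDerivAt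
      (HasDerivAt.prodMk (hasDerivAt_const t q) (hasDerivAt_id t))).deriv
  have hqH : fderiv ℝ (fun q' => H (q', t)) q
      = LH.comp (ContinuousLinearMap.inl ℝ (Fin l → ℝ) ℝ) :=
    (HasFDerivAt.comp q (hHd (q, t)).hasFDerivAt (hasFDerivAt_prodMk_left q t)).fderiv
  have ha' : ∀ w w' : Fin l → ℝ, stdSymp n (Li (w, 0)) (Li (w', 0)) = 0 := by
    intro w w'
    have := ha q t w w'
    rw [hqi] at this
    simpa using this
  have hb' : ∀ w : Fin l → ℝ,
      stdSymp n (Li ((0 : Fin l → ℝ), (1 : ℝ))) (Li (w, 0)) = - LH (w, 0) := by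
    intro w
    have := hb q t w
    rw [hqi, hti, hqH] at this
    simpa using this
  have hTT : stdSymp n (Li ((0 : Fin l → ℝ), (1 : ℝ))) (Li ((0 : Fin l → ℝ), (1 : ℝ))) = 0 := by
    have := stdSymp_skew (Li ((0 : Fin l → ℝ), (1 : ℝ))) (Li ((0 : Fin l → ℝ), (1 : ℝ)))
    linarith
  have hdec : ∀ (w : Fin l → ℝ) (r : ℝ), Li (w, r) = Li (w, 0) + r • Li ((0 : Fin l → ℝ), 1) := by
    intro w r
    have h1 : (w, r) = (w, (0 : ℝ)) + r • ((0 : Fin l → ℝ), (1 : ℝ)) := by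
      simp [Prod.ext_iff]
    rw [h1, map_add, map_smul]
  have hdecH : ∀ (w : Fin l → ℝ) (r : ℝ), LH (w, r) = LH (w, 0) + r * LH ((0 : Fin l → ℝ), 1) := by
    intro w r
    have h1 : (w, r) = (w, (0 : ℝ)) + r • ((0 : Fin l → ℝ), (1 : ℝ)) := by
      simp [Prod.ext_iff]
    rw [h1, map_add, map_smul, smul_eq_mul]
  rw [hj.fderiv]
  simp only [sympPC, ContinuousLinearMap.prod_apply, ContinuousLinearMap.add_apply,
    ContinuousLinearMap.coe_comp', Function.comp_apply, ContinuousLinearMap.smul_apply,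
    ContinuousLinearMap.coe_snd', Complex.ofRealCLM_apply, smul_eq_mul]
  rw [hdec v s, hdec v' s', hdecH v s, hdecH v' s', stdSymp_expand, key_im,
    ha' v v', hb' v', hTT, stdSymp_skew (Li (v, 0)) (Li ((0 : Fin l → ℝ), 1)), hb' v]
  ring
end

section
/- Let I be a finite index set, and for each α ∈ I let l_α, n_α ∈ ℕ, let i^α : ℝ^{l_α} × ℝ → ℂ^{n_α} and H^α : ℝ^{l_α} × ℝ → ℝ be smooth such that for every (q, t): (a) for all v, w ∈ ℝ^{l_α}, ω(D_q i^α(q,t)v, D_q i^α(q,t)w) = 0; and (b) for all v ∈ ℝ^{l_α}, ω(∂_t i^α(q,t), D_q i^α(q,t)v) = −(D_q H^α(q,t))(v). Let m ∈ ℕ and let ρ^α : ℝ^m → ℝ be smooth for each α ∈ I. Define j : (∏_{α∈I} ℝ^{l_α}) × ℝ^m → (∏_{α∈I} ℂ^{n_α}) × ℂ^m by: the ℂ^{n_α}-component of j((q^α)_α, y) is i^α(q^α, ρ^α(y)), and the i-th coordinate of the ℂ^m-component is y_i + i·∑_{α∈I} H^α(q^α, ρ^α(y))·(∂ρ^α/∂y_i)(y).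 Then for every point and all tangent vectors u, u' of the domain, Ω(Dj u, Dj u') = 0, where Ω is the sum of the standard symplectic forms on the factors ℂ^{n_α} and on ℂ^m. (Generalized suspension: j parameterizes a Lagrangian submanifold.) -/
open scoped BigOperators

lemma stdSymp_add_left_s11 (N : ℕ) (u v w : Fin N → ℂ) :
    stdSymp N (u + v) w = stdSymp N u w + stdSymp N v w := by
  simp [stdSymp, add_mul, Finset.sum_add_distrib]

lemma stdSymp_smul_left_s11 (N : ℕ) (r : ℝ) (u v : Fin N → ℂ) :
    stdSymp N (r • u) v = r * stdSymp N u v := by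
  simp [stdSymp, Finset.mul_sum, Complex.real_smul, mul_assoc, Complex.im_ofReal_mul]

lemma stdSymp_antisymm (N : ℕ) (u v : Fin N → ℂ) : stdSymp N u v = - stdSymp N v u := by
  have : (∑ j, (starRingEnd ℂ) (u j) * v j) = (starRingEnd ℂ) (∑ j, (starRingEnd ℂ) (v j) * u j) := by
    rw [map_sum]
    exact Finset.sum_congr rfl fun j _ => by rw [map_mul, RingHomCompTriple.comp_apply]; ring_nf; simp [mul_comm]
  rw [stdSymp, this, Complex.conj_im, stdSymp]

lemma stdSymp_self (N : ℕ) (u : Fin N → ℂ) : stdSymp N u u = 0 := by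
  have h : stdSymp N u u = - stdSymp N u u := stdSymp_antisymm N u u
  linarith

lemma stdSymp_add_right_s11 (N : ℕ) (u v w : Fin N → ℂ) :
    stdSymp N u (v + w) = stdSymp N u v + stdSymp N u w := by
  rw [stdSymp_antisymm, stdSymp_add_left_s11, stdSymp_antisymm N v u, stdSymp_antisymm N w u]; ring

lemma stdSymp_smul_right_s11 (N : ℕ) (r : ℝ) (u v : Fin N → ℂ) :
    stdSymp N u (r • v) = r * stdSymp N u v := by
  rw [stdSymp_antisymm, stdSymp_smul_left_s11, stdSymp_antisymm N v u]; ring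

lemma stdSymp_real_imag (m : ℕ) (a b a' b' : Fin m → ℝ) :
    stdSymp m (fun k => (a k : ℂ) + Complex.I * b k) (fun k => (a' k : ℂ) + Complex.I * b' k)
      = ∑ k, (a k * b' k - b k * a' k) := by
  rw [stdSymp, Complex.im_sum]
  refine Finset.sum_congr rfl fun k _ => ?_
  simp [Complex.ext_iff, Complex.add_im, Complex.mul_im, Complex.mul_re]
  ring

lemma fderiv_prod_split {E G : Type*} [NormedAddCommGroup E] [NormedSpace ℝ E]
    [NormedAddCommGroup G] [NormedSpace ℝ G] (f : E × ℝ → G) (a : E) (b : ℝ)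
    (hf : DifferentiableAt ℝ f (a, b)) (v : E) (s : ℝ) :
    fderiv ℝ f (a, b) (v, s)
      = fderiv ℝ (fun x => f (x, b)) a v + s • deriv (fun t => f (a, t)) b := by
  have h1 : HasFDerivAt (fun x => f (x, b))
      ((fderiv ℝ f (a, b)).comp (ContinuousLinearMap.inl ℝ E ℝ)) a :=
    hf.hasFDerivAt.comp a (hasFDerivAt_prodMk_left a b)
  have h2 : HasFDerivAt (fun t => f (a, t))
      ((fderiv ℝ f (a, b)).comp (ContinuousLinearMap.inr ℝ E ℝ)) b :=
    hf.hasFDerivAt.comp b (hasFDerivAt_prodMk_right a b)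
  rw [h1.fderiv, ← fderiv_apply_one_eq_deriv, h2.fderiv]
  simp only [ContinuousLinearMap.comp_apply, ContinuousLinearMap.inl_apply,
    ContinuousLinearMap.inr_apply]
  rw [← (fderiv ℝ f (a, b)).map_smul, ← map_add]
  congr 1
  simp [Prod.ext_iff]

lemma clm_apply_pi {m : ℕ} {M : Type*} [NormedAddCommGroup M] [NormedSpace ℝ M]
    (f : (Fin m → ℝ) →L[ℝ] M) (w : Fin m → ℝ) :
    f w = ∑ k, w k • f (Pi.single k 1) := by
  conv_lhs => rw [← Finset.univ_sum_single w]
  rw [map_sum]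
  refine Finset.sum_congr rfl fun k _ => ?_
  rw [← f.map_smul]
  congr 1
  ext j
  simp [Pi.single_apply]


set_option maxHeartbeats 2000000

/-- Generalized suspension: given finitely many exact Lagrangian homotopies
`i^α : ℝ^{l_α} × ℝ → ℂ^{n_α}` with flux primitives `H^α`, and smooth reparameterizations
`ρ^α : ℝ^m → ℝ`, the map
`j((q^α)_α, y) = ((i^α(q^α, ρ^α(y)))_α, (y_i + i·∑_α H^α(q^α, ρ^α(y))·∂ρ^α/∂y_i)_i)`
has isotropic derivative for the sum `Ω` of the standard symplectic forms on the factors. -/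
theorem stmt11 (I : Type) [Fintype I] (l nn : I → ℕ) (m : ℕ)
    (i : ∀ α : I, (Fin (l α) → ℝ) × ℝ → Fin (nn α) → ℂ)
    (H : ∀ α : I, (Fin (l α) → ℝ) × ℝ → ℝ)
    (ρ : ∀ α : I, (Fin m → ℝ) → ℝ)
    (hi : ∀ α, ContDiff ℝ (⊤ : ℕ∞) (i α)) (hH : ∀ α, ContDiff ℝ (⊤ : ℕ∞) (H α))
    (hρ : ∀ α, ContDiff ℝ (⊤ : ℕ∞) (ρ α))
    (ha : ∀ (α : I) (q : Fin (l α) → ℝ) (t : ℝ) (v w : Fin (l α) → ℝ),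
      stdSymp (nn α) (fderiv ℝ (fun q' => i α (q', t)) q v)
        (fderiv ℝ (fun q' => i α (q', t)) q w) = 0)
    (hb : ∀ (α : I) (q : Fin (l α) → ℝ) (t : ℝ) (v : Fin (l α) → ℝ),
      stdSymp (nn α) (deriv (fun s => i α (q, s)) t) (fderiv ℝ (fun q' => i α (q', t)) q v)
        = - fderiv ℝ (fun q' => H α (q', t)) q v) :
    let j : ((∀ α : I, Fin (l α) → ℝ) × (Fin m → ℝ)) →
        ((∀ α : I, Fin (nn α) → ℂ) × (Fin m → ℂ)) :=
      fun qy => (fun α => i α (qy.1 α, ρ α qy.2),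
        fun idx => (qy.2 idx : ℂ) + Complex.I *
          ((∑ α : I, H α (qy.1 α, ρ α qy.2) * fderiv ℝ (ρ α) qy.2 (Pi.single idx 1) : ℝ) : ℂ))
    ∀ (p u u' : (∀ α : I, Fin (l α) → ℝ) × (Fin m → ℝ)),
      (∑ α : I, stdSymp (nn α) ((fderiv ℝ j p u).1 α) ((fderiv ℝ j p u').1 α)) +
        stdSymp m (fderiv ℝ j p u).2 (fderiv ℝ j p u').2 = 0 := by
  intro j p u u'
  have hjdef : j = fun qy => (fun α => i α (qy.1 α, ρ α qy.2),
      fun idx => (qy.2 idx : ℂ) + Complex.I *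
        ((∑ α : I, H α (qy.1 α, ρ α qy.2) * fderiv ℝ (ρ α) qy.2 (Pi.single idx 1) : ℝ) : ℂ)) := rfl
  rw [hjdef]
  clear hjdef
  obtain ⟨q, y⟩ := p
  -- first-order data
  have hidiff : ∀ (α : I) (x : (Fin (l α) → ℝ) × ℝ), DifferentiableAt ℝ (i α) x :=
    fun α x => (hi α).differentiable (by simp) x
  have hHdiff : ∀ (α : I) (x : (Fin (l α) → ℝ) × ℝ), DifferentiableAt ℝ (H α) x :=
    fun α x => (hH α).differentiable (by simp) x
  have hρdiff : ∀ (α : I) (x : Fin m → ℝ), DifferentiableAt ℝ (ρ α) x :=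
    fun α x => (hρ α).differentiable (by simp) x
  have hΦdiff : ∀ (α : I) (x : Fin m → ℝ), DifferentiableAt ℝ (fderiv ℝ (ρ α)) x :=
    fun α x => by
    have h2 : ContDiff ℝ 2 (ρ α) := (hρ α).of_le (by norm_cast)
    exact ((h2.fderiv_right (m := 1) (by norm_num)).differentiable one_ne_zero) x
  -- inner maps
  have hE : ∀ α : I, HasFDerivAt (fun qy : (∀ α : I, Fin (l α) → ℝ) × (Fin m → ℝ) => (qy.1 α, ρ α qy.2))
      ((((ContinuousLinearMap.proj α).comp (ContinuousLinearMap.fst ℝ _ _)).prod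
        ((fderiv ℝ (ρ α) y).comp (ContinuousLinearMap.snd ℝ _ _)))) (q, y) := by
    intro α
    exact HasFDerivAt.prodMk (((ContinuousLinearMap.proj α).comp
        (ContinuousLinearMap.fst ℝ (∀ α : I, Fin (l α) → ℝ) (Fin m → ℝ))).hasFDerivAt)
      (((hρdiff α y).hasFDerivAt).comp (q, y)
        (ContinuousLinearMap.snd ℝ (∀ α : I, Fin (l α) → ℝ) (Fin m → ℝ)).hasFDerivAt)
  have h1 : ∀ α : I, HasFDerivAt (fun qy : (∀ α : I, Fin (l α) → ℝ) × (Fin m → ℝ) => i α (qy.1 α, ρ α qy.2))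
      ((fderiv ℝ (i α) (q α, ρ α y)).comp
        (((ContinuousLinearMap.proj α).comp (ContinuousLinearMap.fst ℝ _ _)).prod
          ((fderiv ℝ (ρ α) y).comp (ContinuousLinearMap.snd ℝ _ _)))) (q, y) :=
    fun α => ((hidiff α _).hasFDerivAt).comp (q, y) (hE α)
  have hHc : ∀ α : I, HasFDerivAt (fun qy : (∀ α : I, Fin (l α) → ℝ) × (Fin m → ℝ) => H α (qy.1 α, ρ α qy.2))
      ((fderiv ℝ (H α) (q α, ρ α y)).comp
        (((ContinuousLinearMap.proj α).comp (ContinuousLinearMap.fst ℝ _ _)).prod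
          ((fderiv ℝ (ρ α) y).comp (ContinuousLinearMap.snd ℝ _ _)))) (q, y) :=
    fun α => ((hHdiff α _).hasFDerivAt).comp (q, y) (hE α)
  have hG : ∀ (α : I) (k : Fin m), HasFDerivAt
      (fun qy : (∀ α : I, Fin (l α) → ℝ) × (Fin m → ℝ) => fderiv ℝ (ρ α) qy.2 (Pi.single k 1))
      ((ContinuousLinearMap.apply ℝ ℝ (Pi.single k 1)).comp
        ((fderiv ℝ (fderiv ℝ (ρ α)) y).comp (ContinuousLinearMap.snd ℝ _ _))) (q, y) := by
    intro α k
    exact (ContinuousLinearMap.apply ℝ ℝ (Pi.single k 1)).hasFDerivAt.comp (q, y)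
      (((hΦdiff α y).hasFDerivAt).comp (q, y)
        (ContinuousLinearMap.snd ℝ (∀ α : I, Fin (l α) → ℝ) (Fin m → ℝ)).hasFDerivAt)
  have hF : ∀ k : Fin m, HasFDerivAt
      (fun qy : (∀ α : I, Fin (l α) → ℝ) × (Fin m → ℝ) => (∑ α : I, H α (qy.1 α, ρ α qy.2) * fderiv ℝ (ρ α) qy.2 (Pi.single k 1)))
      (∑ α : I, (H α (q α, ρ α y) •
          ((ContinuousLinearMap.apply ℝ ℝ (Pi.single k 1)).comp
            ((fderiv ℝ (fderiv ℝ (ρ α)) y).comp (ContinuousLinearMap.snd ℝ _ _)))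
        + (fderiv ℝ (ρ α) y (Pi.single k 1)) •
          ((fderiv ℝ (H α) (q α, ρ α y)).comp
            (((ContinuousLinearMap.proj α).comp (ContinuousLinearMap.fst ℝ _ _)).prod
              ((fderiv ℝ (ρ α) y).comp (ContinuousLinearMap.snd ℝ _ _)))))) (q, y) :=
    fun k => HasFDerivAt.fun_sum (fun α _ => (hHc α).mul (hG α k))
  have hj2 : ∀ k : Fin m, HasFDerivAt
      (fun qy : (∀ α : I, Fin (l α) → ℝ) × (Fin m → ℝ) => ((qy.2 k : ℝ) : ℂ) + Complex.I *
        ((∑ α : I, H α (qy.1 α, ρ α qy.2) * fderiv ℝ (ρ α) qy.2 (Pi.single k 1) : ℝ) : ℂ))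
      (Complex.ofRealCLM.comp
          ((ContinuousLinearMap.proj k).comp (ContinuousLinearMap.snd ℝ _ _))
        + Complex.I • (Complex.ofRealCLM.comp
          (∑ α : I, (H α (q α, ρ α y) •
            ((ContinuousLinearMap.apply ℝ ℝ (Pi.single k 1)).comp
              ((fderiv ℝ (fderiv ℝ (ρ α)) y).comp (ContinuousLinearMap.snd ℝ _ _)))
          + (fderiv ℝ (ρ α) y (Pi.single k 1)) •
            ((fderiv ℝ (H α) (q α, ρ α y)).comp
              (((ContinuousLinearMap.proj α).comp (ContinuousLinearMap.fst ℝ _ _)).prod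
                ((fderiv ℝ (ρ α) y).comp (ContinuousLinearMap.snd ℝ _ _)))))))) (q, y) :=
    by
    intro k
    have hA : HasFDerivAt (fun qy : (∀ α : I, Fin (l α) → ℝ) × (Fin m → ℝ) => ((qy.2 k : ℝ) : ℂ))
        (Complex.ofRealCLM.comp ((ContinuousLinearMap.proj k).comp
          (ContinuousLinearMap.snd ℝ (∀ α : I, Fin (l α) → ℝ) (Fin m → ℝ)))) (q, y) :=
      (Complex.ofRealCLM.comp ((ContinuousLinearMap.proj k).comp
        (ContinuousLinearMap.snd ℝ (∀ α : I, Fin (l α) → ℝ) (Fin m → ℝ)))).hasFDerivAt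
    exact hA.add ((Complex.ofRealCLM.hasFDerivAt.comp (q, y) (hF k)).const_mul Complex.I)
  -- split the derivative of j into components
  have hsplit : ∀ w : (∀ α : I, Fin (l α) → ℝ) × (Fin m → ℝ), fderiv ℝ (fun qy : (∀ α : I, Fin (l α) → ℝ) × (Fin m → ℝ) => ((fun α => i α (qy.1 α, ρ α qy.2),
        fun idx => ((qy.2 idx : ℝ) : ℂ) + Complex.I *
          ((∑ α : I, H α (qy.1 α, ρ α qy.2) * fderiv ℝ (ρ α) qy.2 (Pi.single idx 1) : ℝ) : ℂ)) :
        (∀ α : I, Fin (nn α) → ℂ) × (Fin m → ℂ))) (q, y) w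
      = (fun α => fderiv ℝ (fun qy : (∀ α : I, Fin (l α) → ℝ) × (Fin m → ℝ) => i α (qy.1 α, ρ α qy.2)) (q, y) w,
         fun k => fderiv ℝ (fun qy : (∀ α : I, Fin (l α) → ℝ) × (Fin m → ℝ) => ((qy.2 k : ℝ) : ℂ) + Complex.I *
           ((∑ α : I, H α (qy.1 α, ρ α qy.2) * fderiv ℝ (ρ α) qy.2 (Pi.single k 1) : ℝ) : ℂ))
           (q, y) w) := by
    intro w
    have d1 : DifferentiableAt ℝ
        (fun qy : (∀ α : I, Fin (l α) → ℝ) × (Fin m → ℝ) => (fun α => i α (qy.1 α, ρ α qy.2))) (q, y) :=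
      differentiableAt_pi.mpr fun α => (h1 α).differentiableAt
    have d2 : DifferentiableAt ℝ
        (fun qy : (∀ α : I, Fin (l α) → ℝ) × (Fin m → ℝ) => (fun k => ((qy.2 k : ℝ) : ℂ) + Complex.I *
          ((∑ α : I, H α (qy.1 α, ρ α qy.2) * fderiv ℝ (ρ α) qy.2 (Pi.single k 1) : ℝ) : ℂ)))
        (q, y) := differentiableAt_pi.mpr fun k => (hj2 k).differentiableAt
    have : fderiv ℝ (fun qy : (∀ α : I, Fin (l α) → ℝ) × (Fin m → ℝ) => ((fun α => i α (qy.1 α, ρ α qy.2),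
        fun idx => ((qy.2 idx : ℝ) : ℂ) + Complex.I *
          ((∑ α : I, H α (qy.1 α, ρ α qy.2) * fderiv ℝ (ρ α) qy.2 (Pi.single idx 1) : ℝ) : ℂ)) :
        (∀ α : I, Fin (nn α) → ℂ) × (Fin m → ℂ))) (q, y) = (fderiv ℝ
        (fun qy : (∀ α : I, Fin (l α) → ℝ) × (Fin m → ℝ) => (fun α => i α (qy.1 α, ρ α qy.2))) (q, y)).prod
        (fderiv ℝ (fun qy : (∀ α : I, Fin (l α) → ℝ) × (Fin m → ℝ) => (fun k => ((qy.2 k : ℝ) : ℂ) + Complex.I *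
          ((∑ α : I, H α (qy.1 α, ρ α qy.2) * fderiv ℝ (ρ α) qy.2 (Pi.single k 1) : ℝ) : ℂ)))
          (q, y)) := DifferentiableAt.fderiv_prodMk d1 d2
    rw [this]
    rw [ContinuousLinearMap.prod_apply, fderiv_pi (fun α => (h1 α).differentiableAt),
      fderiv_pi (fun k => (hj2 k).differentiableAt)]
    rfl
  -- applied formula for the first components
  have h1app : ∀ (w : (∀ α : I, Fin (l α) → ℝ) × (Fin m → ℝ)) (α : I),
      fderiv ℝ (fun qy : (∀ α : I, Fin (l α) → ℝ) × (Fin m → ℝ) => i α (qy.1 α, ρ α qy.2)) (q, y) w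
        = fderiv ℝ (fun q' => i α (q', ρ α y)) (q α) (w.1 α)
          + (fderiv ℝ (ρ α) y w.2) • deriv (fun s => i α (q α, s)) (ρ α y) := by
    intro w α
    rw [(h1 α).fderiv]
    have hs := fderiv_prod_split (i α) (q α) (ρ α y) (hidiff α _) (w.1 α)
      (fderiv ℝ (ρ α) y w.2)
    simpa using hs
  -- partial-derivative split for H
  have hHsplit : ∀ (w : (∀ α : I, Fin (l α) → ℝ) × (Fin m → ℝ)) (α : I),
      fderiv ℝ (H α) (q α, ρ α y) (w.1 α, fderiv ℝ (ρ α) y w.2)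
        = fderiv ℝ (fun q' => H α (q', ρ α y)) (q α) (w.1 α)
          + fderiv ℝ (ρ α) y w.2 * deriv (fun s => H α (q α, s)) (ρ α y) := by
    intro w α
    rw [fderiv_prod_split (H α) _ _ (hHdiff α _), smul_eq_mul]
  -- applied formula for the second components
  have h2app : ∀ (w : (∀ α : I, Fin (l α) → ℝ) × (Fin m → ℝ)) (k : Fin m),
      fderiv ℝ (fun qy : (∀ α : I, Fin (l α) → ℝ) × (Fin m → ℝ) => ((qy.2 k : ℝ) : ℂ) + Complex.I *
        ((∑ α : I, H α (qy.1 α, ρ α qy.2) * fderiv ℝ (ρ α) qy.2 (Pi.single k 1) : ℝ) : ℂ))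
        (q, y) w
      = ((w.2 k : ℝ) : ℂ) + Complex.I *
        ((∑ α : I, (H α (q α, ρ α y) * (fderiv ℝ (fderiv ℝ (ρ α)) y w.2) (Pi.single k 1)
          + fderiv ℝ (ρ α) y (Pi.single k 1) *
            (fderiv ℝ (fun q' => H α (q', ρ α y)) (q α) (w.1 α)
              + fderiv ℝ (ρ α) y w.2 * deriv (fun s => H α (q α, s)) (ρ α y))) : ℝ) : ℂ) := by
    intro w k
    rw [(hj2 k).fderiv]
    have hsnd : ∀ v : (∀ α : I, Fin (l α) → ℝ) × (Fin m → ℝ), (ContinuousLinearMap.snd ℝ (∀ α : I, Fin (l α) → ℝ) (Fin m → ℝ)) v = v.2 :=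
      fun _ => rfl
    have hfst : ∀ v : (∀ α : I, Fin (l α) → ℝ) × (Fin m → ℝ), (ContinuousLinearMap.fst ℝ (∀ α : I, Fin (l α) → ℝ) (Fin m → ℝ)) v = v.1 :=
      fun _ => rfl
    simp [hsnd, hfst, hHsplit w]
  -- symmetry of the second derivative of ρ
  have hsym : ∀ (α : I) (w w' : Fin m → ℝ),
      fderiv ℝ (fderiv ℝ (ρ α)) y w w' = fderiv ℝ (fderiv ℝ (ρ α)) y w' w :=
    fun α w w' => second_derivative_symmetric
      (fun z => (hρdiff α z).hasFDerivAt) ((hΦdiff α y).hasFDerivAt) w w'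
  -- evaluate the symplectic pairing on the fiber components
  have hω : ∀ α : I, stdSymp (nn α)
      (fderiv ℝ (fun q' => i α (q', ρ α y)) (q α) (u.1 α)
        + (fderiv ℝ (ρ α) y u.2) • deriv (fun s => i α (q α, s)) (ρ α y))
      (fderiv ℝ (fun q' => i α (q', ρ α y)) (q α) (u'.1 α)
        + (fderiv ℝ (ρ α) y u'.2) • deriv (fun s => i α (q α, s)) (ρ α y))
      = fderiv ℝ (ρ α) y u'.2 * fderiv ℝ (fun q' => H α (q', ρ α y)) (q α) (u.1 α)
        - fderiv ℝ (ρ α) y u.2 * fderiv ℝ (fun q' => H α (q', ρ α y)) (q α) (u'.1 α) := by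
    intro α
    have e1 : stdSymp (nn α) (fderiv ℝ (fun q' => i α (q', ρ α y)) (q α) (u.1 α))
        (deriv (fun s => i α (q α, s)) (ρ α y))
        = fderiv ℝ (fun q' => H α (q', ρ α y)) (q α) (u.1 α) := by
      rw [stdSymp_antisymm, hb α]; ring
    simp only [stdSymp_add_left_s11, stdSymp_add_right_s11, stdSymp_smul_left_s11, stdSymp_smul_right_s11]
    rw [ha α (q α) (ρ α y) (u.1 α) (u'.1 α), hb α (q α) (ρ α y) (u'.1 α),
      stdSymp_self, e1]
    ring
  -- key resummation identity
  have hkey : ∀ (z w : Fin m → ℝ) (d : I → ℝ),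
      (∑ k : Fin m, z k * (∑ α : I,
          (H α (q α, ρ α y) * (fderiv ℝ (fderiv ℝ (ρ α)) y w) (Pi.single k 1)
            + fderiv ℝ (ρ α) y (Pi.single k 1) * d α)))
        = ∑ α : I, (H α (q α, ρ α y) * (fderiv ℝ (fderiv ℝ (ρ α)) y w) z
            + d α * fderiv ℝ (ρ α) y z) := by
    intro z w d
    simp_rw [Finset.mul_sum]
    rw [Finset.sum_comm]
    refine Finset.sum_congr rfl fun α _ => ?_
    rw [clm_apply_pi (fderiv ℝ (fderiv ℝ (ρ α)) y w) z, clm_apply_pi (fderiv ℝ (ρ α) y) z,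
      Finset.mul_sum, Finset.mul_sum, ← Finset.sum_add_distrib]
    refine Finset.sum_congr rfl fun k _ => ?_
    simp only [smul_eq_mul]
    ring
  -- now compute
  simp only [hsplit, h1app, h2app]
  rw [stdSymp_real_imag m u.2
    (fun k => ∑ α : I, (H α (q α, ρ α y) * (fderiv ℝ (fderiv ℝ (ρ α)) y u.2) (Pi.single k 1)
      + fderiv ℝ (ρ α) y (Pi.single k 1) *
        (fderiv ℝ (fun q' => H α (q', ρ α y)) (q α) (u.1 α)
          + fderiv ℝ (ρ α) y u.2 * deriv (fun s => H α (q α, s)) (ρ α y))))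
    u'.2
    (fun k => ∑ α : I, (H α (q α, ρ α y) * (fderiv ℝ (fderiv ℝ (ρ α)) y u'.2) (Pi.single k 1)
      + fderiv ℝ (ρ α) y (Pi.single k 1) *
        (fderiv ℝ (fun q' => H α (q', ρ α y)) (q α) (u'.1 α)
          + fderiv ℝ (ρ α) y u'.2 * deriv (fun s => H α (q α, s)) (ρ α y))))]
  simp only [hω]
  have hc : (∑ k : Fin m, (∑ α : I,
      (H α (q α, ρ α y) * (fderiv ℝ (fderiv ℝ (ρ α)) y u.2) (Pi.single k 1)
        + fderiv ℝ (ρ α) y (Pi.single k 1) *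
          (fderiv ℝ (fun q' => H α (q', ρ α y)) (q α) (u.1 α)
            + fderiv ℝ (ρ α) y u.2 * deriv (fun s => H α (q α, s)) (ρ α y)))) * u'.2 k)
      = ∑ k : Fin m, u'.2 k * (∑ α : I,
      (H α (q α, ρ α y) * (fderiv ℝ (fderiv ℝ (ρ α)) y u.2) (Pi.single k 1)
        + fderiv ℝ (ρ α) y (Pi.single k 1) *
          (fderiv ℝ (fun q' => H α (q', ρ α y)) (q α) (u.1 α)
            + fderiv ℝ (ρ α) y u.2 * deriv (fun s => H α (q α, s)) (ρ α y)))) :=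
    Finset.sum_congr rfl fun k _ => mul_comm _ _
  have e2 : (∑ k : Fin m, (u.2 k * (∑ α : I,
      (H α (q α, ρ α y) * (fderiv ℝ (fderiv ℝ (ρ α)) y u'.2) (Pi.single k 1)
        + fderiv ℝ (ρ α) y (Pi.single k 1) *
          (fderiv ℝ (fun q' => H α (q', ρ α y)) (q α) (u'.1 α)
            + fderiv ℝ (ρ α) y u'.2 * deriv (fun s => H α (q α, s)) (ρ α y))))
      - (∑ α : I,
      (H α (q α, ρ α y) * (fderiv ℝ (fderiv ℝ (ρ α)) y u.2) (Pi.single k 1)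
        + fderiv ℝ (ρ α) y (Pi.single k 1) *
          (fderiv ℝ (fun q' => H α (q', ρ α y)) (q α) (u.1 α)
            + fderiv ℝ (ρ α) y u.2 * deriv (fun s => H α (q α, s)) (ρ α y)))) * u'.2 k))
      = (∑ k : Fin m, u.2 k * (∑ α : I,
      (H α (q α, ρ α y) * (fderiv ℝ (fderiv ℝ (ρ α)) y u'.2) (Pi.single k 1)
        + fderiv ℝ (ρ α) y (Pi.single k 1) *
          (fderiv ℝ (fun q' => H α (q', ρ α y)) (q α) (u'.1 α)
            + fderiv ℝ (ρ α) y u'.2 * deriv (fun s => H α (q α, s)) (ρ α y)))))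
      - (∑ k : Fin m, (∑ α : I,
      (H α (q α, ρ α y) * (fderiv ℝ (fderiv ℝ (ρ α)) y u.2) (Pi.single k 1)
        + fderiv ℝ (ρ α) y (Pi.single k 1) *
          (fderiv ℝ (fun q' => H α (q', ρ α y)) (q α) (u.1 α)
            + fderiv ℝ (ρ α) y u.2 * deriv (fun s => H α (q α, s)) (ρ α y)))) * u'.2 k) :=
    Finset.sum_sub_distrib _ _
  rw [e2, hc, hkey u.2 u'.2, hkey u'.2 u.2, ← Finset.sum_sub_distrib, ← Finset.sum_add_distrib]
  refine Finset.sum_eq_zero fun α _ => ?_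
  rw [hsym α u'.2 u.2]
  ring
end

section
/- Let m, n ∈ ℕ, let U ⊆ ℝ^m be open, let j : U → ℂ^n × ℂ be smooth, and let x₀ ∈ U be such that: Dj_{x₀} is injective; ω(Dj_{x₀} v, Dj_{x₀} w) = 0 for all v, w ∈ ℝ^m (with ℂ^n × ℂ identified with ℂ^{n+1}); and the differential at x₀ of the function f := Re ∘ pr₂ ∘ j is nonzero (x₀ is a regular point of the cobordism height). Then for all v, w ∈ ker(Df_{x₀}): ω_{ℂ^n}(D(π∘j)_{x₀} v, D(π∘j)_{x₀} w) = 0, and the restriction of D(π∘j)_{x₀} to ker(Df_{x₀}) is injective. (A regular slice of an immersed Lagrangian cobordism is an immersed Lagrangian submanifold.) -/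
open scoped BigOperators

/-- A regular slice of an immersed Lagrangian cobordism is an immersed Lagrangian
submanifold: if `j` is a Lagrangian immersion at `x₀` and `x₀` is a regular point of the
height `f = Re ∘ pr₂ ∘ j`, then on `ker Df_{x₀}` the derivative of `π ∘ j` is isotropic for
the standard symplectic form on `ℂ^n` and injective. -/
theorem stmt12 (m n : ℕ) (U : Set (Fin m → ℝ)) (hU : IsOpen U)
    (j : (Fin m → ℝ) → (Fin n → ℂ) × ℂ) (hj : ContDiffOn ℝ (⊤ : ℕ∞) j U)
    (x₀ : Fin m → ℝ) (hx₀ : x₀ ∈ U)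
    (hinj : Function.Injective (fderiv ℝ j x₀))
    (hlag : ∀ v w : Fin m → ℝ, sympPC n (fderiv ℝ j x₀ v) (fderiv ℝ j x₀ w) = 0)
    (hreg : fderiv ℝ (fun x => ((j x).2).re) x₀ ≠ 0) :
    (∀ v ∈ {v : Fin m → ℝ | fderiv ℝ (fun x => ((j x).2).re) x₀ v = 0},
      ∀ w ∈ {v : Fin m → ℝ | fderiv ℝ (fun x => ((j x).2).re) x₀ v = 0},
        stdSymp n (fderiv ℝ (fun x => (j x).1) x₀ v) (fderiv ℝ (fun x => (j x).1) x₀ w) = 0) ∧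
    Set.InjOn (fderiv ℝ (fun x => (j x).1) x₀)
      {v : Fin m → ℝ | fderiv ℝ (fun x => ((j x).2).re) x₀ v = 0} := by
  have hdiff : DifferentiableAt ℝ j x₀ :=
    (hj.differentiableOn (by simp)).differentiableAt (hU.mem_nhds hx₀)
  set L := fderiv ℝ j x₀ with hL
  have h1 : fderiv ℝ (fun x => (j x).1) x₀ =
      (ContinuousLinearMap.fst ℝ (Fin n → ℂ) ℂ).comp L :=
    ((ContinuousLinearMap.fst ℝ (Fin n → ℂ) ℂ).hasFDerivAt.comp x₀ hdiff.hasFDerivAt).fderiv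
  have h2 : fderiv ℝ (fun x => ((j x).2).re) x₀ =
      (Complex.reCLM.comp ((ContinuousLinearMap.snd ℝ (Fin n → ℂ) ℂ))).comp L :=
    ((Complex.reCLM.comp
      (ContinuousLinearMap.snd ℝ (Fin n → ℂ) ℂ)).hasFDerivAt.comp x₀ hdiff.hasFDerivAt).fderiv
  have hker : ∀ v, fderiv ℝ (fun x => ((j x).2).re) x₀ v = 0 ↔ ((L v).2).re = 0 := by
    intro v; rw [h2]; simp
  have h1v : ∀ v, fderiv ℝ (fun x => (j x).1) x₀ v = (L v).1 := by
    intro v; rw [h1]; simp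
  -- Key: imaginary pairing
  have him : ∀ (a b : ℂ), a.re = 0 → b.re = 0 → ((starRingEnd ℂ) a * b).im = 0 := by
    intro a b ha hb
    simp [Complex.mul_im, ha, hb]
  have hiso : ∀ v ∈ {v : Fin m → ℝ | fderiv ℝ (fun x => ((j x).2).re) x₀ v = 0},
      ∀ w ∈ {v : Fin m → ℝ | fderiv ℝ (fun x => ((j x).2).re) x₀ v = 0},
        stdSymp n (fderiv ℝ (fun x => (j x).1) x₀ v) (fderiv ℝ (fun x => (j x).1) x₀ w) = 0 := by
    intro v hv w hw
    have := hlag v w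
    rw [sympPC] at this
    have h2im : ((starRingEnd ℂ) (L v).2 * (L w).2).im = 0 :=
      him _ _ ((hker v).1 hv) ((hker w).1 hw)
    rw [h1v, h1v]
    linarith [this, h2im]
  refine ⟨hiso, ?_⟩
  intro v hv w hw heq
  -- u := v - w has (L u).1 = 0 and (L u).2.re = 0
  set u := v - w with hu
  have hLu1 : (L u).1 = 0 := by
    have : (L v).1 = (L w).1 := by rw [← h1v, ← h1v, heq]
    simp [hu, map_sub, Prod.fst_sub, this]
  have hLu2re : ((L u).2).re = 0 := by
    have hv' := (hker v).1 hv
    have hw' := (hker w).1 hw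
    simp [hu, map_sub, Prod.snd_sub, Complex.sub_re, hv', hw']
  -- Show (L u).2.im = 0 using hlag against arbitrary x and hreg
  have him2 : ∀ x, ((L x).2).re * ((L u).2).im = 0 := by
    intro x
    have := hlag x u
    rw [sympPC] at this
    have hfst : ∀ k : Fin n, (L u).1 k = 0 := by
      intro k; rw [hLu1]; rfl
    have hstd : stdSymp n (L x).1 (L u).1 = 0 := by
      unfold stdSymp
      simp [hfst]
    rw [hstd, zero_add] at this
    have : ((starRingEnd ℂ) (L x).2 * (L u).2).im = 0 := this
    rw [Complex.mul_im] at this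
    simp only [Complex.conj_re, Complex.conj_im] at this
    linear_combination this + ((L x).2).im * hLu2re
  have hex : ∃ x, ((L x).2).re ≠ 0 := by
    by_contra h
    push_neg at h
    apply hreg
    ext x
    simp only [ContinuousLinearMap.zero_apply]
    exact (hker x).2 (h x)
  obtain ⟨x, hx⟩ := hex
  have him0 : ((L u).2).im = 0 := by
    have := him2 x
    exact (mul_eq_zero.mp this).resolve_left hx
  have hLu : L u = 0 := by
    ext1
    · exact hLu1
    · exact Complex.ext hLu2re him0
  have : u = 0 := by
    apply hinj
    rw [hLu]; simp
  have := sub_eq_zero.mp this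
  exact this
end

section
/- Let n ∈ ℕ, let U ⊆ ℝ^{n+1} be open, let j : U → ℂ^n × ℂ be smooth, and let x ∈ U be such that Dj_x is injective and ω(Dj_x v, Dj_x w) = 0 for all v, w ∈ ℝ^{n+1} (so the image of Dj_x is a Lagrangian subspace of ℂ^{n+1}). Then it is not the case that both D(Re ∘ pr₂ ∘ j)_x = 0 and D(Im ∘ pr₂ ∘ j)_x = 0. (A point of a Lagrangian cobordism cannot be a critical point of both the real and the imaginary projection to the cobordism factor ℂ.) -/
open scoped BigOperators

open Module in
lemma key_s13 (n : ℕ) (T : (Fin (n+1) → ℝ) →ₗ[ℝ] (Fin n → ℂ))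
    (hT : Function.Injective T)
    (hiso : ∀ v w, (∑ j, (starRingEnd ℂ) (T v j) * T w j).im = 0) : False := by
  classical
  letI : InnerProductSpace ℝ (EuclideanSpace ℂ (Fin n)) := InnerProductSpace.complexToReal
  set E := EuclideanSpace ℂ (Fin n)
  let e : (Fin n → ℂ) ≃ₗ[ℝ] E := (WithLp.linearEquiv 2 ℂ (Fin n → ℂ)).symm.restrictScalars ℝ
  let S : (Fin (n+1) → ℝ) →ₗ[ℝ] E := e.toLinearMap ∘ₗ T
  have hS : Function.Injective S := e.injective.comp hT
  have hinner : ∀ v w, (inner ℂ (S v) (S w)).im = 0 := by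
    intro v w
    show (inner ℂ ((WithLp.equiv 2 (Fin n → ℂ)).symm (T v))
        ((WithLp.equiv 2 (Fin n → ℂ)).symm (T w))).im = 0
    simp only [PiLp.inner_apply, RCLike.inner_apply, WithLp.equiv_symm_apply, PiLp.toLp_apply]
    simpa only [mul_comm] using hiso v w
  let mI : E ≃ₗ[ℝ] E := (LinearEquiv.smulOfNeZero ℂ E Complex.I Complex.I_ne_zero).restrictScalars ℝ
  let L : Submodule ℝ E := LinearMap.range S
  let L' : Submodule ℝ E := L.map (mI : E →ₗ[ℝ] E)
  have hle : L ≤ L'ᗮ := by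
    rintro u ⟨v, rfl⟩
    rw [Submodule.mem_orthogonal]
    rintro _ ⟨_, ⟨w, rfl⟩, rfl⟩
    show inner ℝ (Complex.I • S w) (S v) = 0
    have : inner ℂ (Complex.I • S w) (S v) = -Complex.I * inner ℂ (S w) (S v) := by
      rw [inner_smul_left]; simp
    have h2 : inner ℝ (Complex.I • S w) (S v)
        = Complex.re (inner ℂ (Complex.I • S w) (S v)) := rfl
    rw [h2, this]
    simp [Complex.mul_re, hinner w v]
  have hdimE : finrank ℝ E = 2 * n := by
    have h1 : finrank ℝ ℂ * finrank ℂ E = finrank ℝ E := finrank_mul_finrank ℝ ℂ E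
    rw [← h1, Complex.finrank_real_complex, finrank_euclideanSpace_fin]
  have hL : finrank ℝ L = n + 1 := by
    rw [LinearMap.finrank_range_of_inj hS]
    simp
  have hL' : finrank ℝ L' = n + 1 := by
    show finrank ℝ (Submodule.map (mI : E →ₗ[ℝ] E) L) = n + 1
    rw [LinearEquiv.finrank_map_eq mI L, hL]
  have horth := Submodule.finrank_add_finrank_orthogonal L'
  have hmono : finrank ℝ L ≤ finrank ℝ L'ᗮ := Submodule.finrank_mono hle
  omega


/-- A point of a Lagrangian cobordism cannot be a critical point of both the real and the
imaginary projections to the cobordism factor `ℂ`: if the image of `Dj_x` is a Lagrangian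
subspace of `ℂ^{n+1}`, then `D(Re ∘ pr₂ ∘ j)_x` and `D(Im ∘ pr₂ ∘ j)_x` do not both vanish. -/
theorem stmt13 (n : ℕ) (U : Set (Fin (n + 1) → ℝ)) (hU : IsOpen U)
    (j : (Fin (n + 1) → ℝ) → (Fin n → ℂ) × ℂ) (hj : ContDiffOn ℝ (⊤ : ℕ∞) j U)
    (x : Fin (n + 1) → ℝ) (hx : x ∈ U)
    (hinj : Function.Injective (fderiv ℝ j x))
    (hlag : ∀ v w : Fin (n + 1) → ℝ, sympPC n (fderiv ℝ j x v) (fderiv ℝ j x w) = 0) :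
    ¬ (fderiv ℝ (fun y => ((j y).2).re) x = 0 ∧ fderiv ℝ (fun y => ((j y).2).im) x = 0) := by
  rintro ⟨h1, h2⟩
  have hd : DifferentiableAt ℝ j x :=
    (hj.contDiffAt (hU.mem_nhds hx)).differentiableAt (by simp)
  set D := fderiv ℝ j x with hD
  have hre : fderiv ℝ (fun y => ((j y).2).re) x
      = (Complex.reCLM.comp (ContinuousLinearMap.snd ℝ (Fin n → ℂ) ℂ)).comp D := by
    have h := ((Complex.reCLM.comp
      (ContinuousLinearMap.snd ℝ (Fin n → ℂ) ℂ)).hasFDerivAt.comp x hd.hasFDerivAt).fderiv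
    rw [← h]
    congr 1
  have him : fderiv ℝ (fun y => ((j y).2).im) x
      = (Complex.imCLM.comp (ContinuousLinearMap.snd ℝ (Fin n → ℂ) ℂ)).comp D := by
    have h := ((Complex.imCLM.comp
      (ContinuousLinearMap.snd ℝ (Fin n → ℂ) ℂ)).hasFDerivAt.comp x hd.hasFDerivAt).fderiv
    rw [← h]
    congr 1
  have hsnd : ∀ v, (D v).2 = 0 := by
    intro v
    apply Complex.ext
    · have := congrArg (fun (f : (Fin (n+1) → ℝ) →L[ℝ] ℝ) => f v) (hre.symm.trans h1)
      simpa using this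
    · have := congrArg (fun (f : (Fin (n+1) → ℝ) →L[ℝ] ℝ) => f v) (him.symm.trans h2)
      simpa using this
  let T : (Fin (n+1) → ℝ) →ₗ[ℝ] (Fin n → ℂ) :=
    ((ContinuousLinearMap.fst ℝ (Fin n → ℂ) ℂ).comp D).toLinearMap
  have hT : Function.Injective T := by
    intro v w h
    apply hinj
    exact Prod.ext h ((hsnd v).trans (hsnd w).symm)
  refine key_s13 n T hT ?_
  intro v w
  have := hlag v w
  unfold sympPC stdSymp at this
  rw [hsnd v] at this
  simpa [T] using this
end
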